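/- Let q, z, u be complex numbers with q ≠ 0 and z·q² ≠ 1. Let T_rev(z) be the 4×4 matrix defined in the context, and let D_new be the 4×4 complex matrix (with u playing the role of q^{2C₀}) with rows: row 1 = [ (u − q²)(u − q⁴)·q^{−6}, u·(u − q²)·q^{−6}, u·(u − q²)·q^{−6}, u²·q^{−6} ]; row 2 = [ 1 − u·q^{−2}, −(u − q²)·q^{−4}, −u·q^{−4}, −u·q^{−6} ]; row 3 = [ 1 − u·q^{−2}, −u·q^{−4}, −(u − 1)·q^{−4}, −u·q^{−6} ]; row 4 = [ 1, q^{−4}, q^{−4}, q^{−8} ]. Then T_rev(z)·D_new = D_new·(T_rev(z))ᵀ (this is the identity 𝒯^{stoch}(z,−i∞)·D_new = D_new·(𝒯^{stoch}_rev(z,−i∞))*, since the dynamic transfer matrix at λ = −i∞ equals T_rev(z)). -/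

import Mathlib

open Matrix

/-- The reversed non-dynamic two-site stochastic six-vertex transfer matrix
(equal to the dynamic transfer matrix at `λ = −i∞`). -/
noncomputable def Trev (q z : ℂ) : Matrix (Fin 4) (Fin 4) ℂ :=
  !![1, 0, 0, 0;
     0, (q ^ 2 - 1) / (z * q ^ 2 - 1), q ^ 2 * (z - 1) / (z * q ^ 2 - 1), 0;
     0, (z - 1) / (z * q ^ 2 - 1), z * (q ^ 2 - 1) / (z * q ^ 2 - 1), 0;
     0, 0, 0, 1]

set_option maxHeartbeats 2000000 in
/-- The two-site duality matrix `D_new`, with `u = q^{2C₀}`. -/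
noncomputable def Dnew (q u : ℂ) : Matrix (Fin 4) (Fin 4) ℂ :=
  !![(u - q ^ 2) * (u - q ^ 4) * q ^ (-6 : ℤ),
       u * (u - q ^ 2) * q ^ (-6 : ℤ),
       u * (u - q ^ 2) * q ^ (-6 : ℤ),
       u ^ 2 * q ^ (-6 : ℤ);
     1 - u * q ^ (-2 : ℤ),
       -(u - q ^ 2) * q ^ (-4 : ℤ),
       -u * q ^ (-4 : ℤ),
       -u * q ^ (-6 : ℤ);
     1 - u * q ^ (-2 : ℤ),
       -u * q ^ (-4 : ℤ),
       -(u - 1) * q ^ (-4 : ℤ),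
       -u * q ^ (-6 : ℤ);
     1, q ^ (-4 : ℤ), q ^ (-4 : ℤ), q ^ (-8 : ℤ)]

set_option maxHeartbeats 2000000 in
/-- The two-site duality `𝒯^{stoch}(z,−i∞) D_new = D_new (𝒯^{stoch}_rev(z,−i∞))*`
for the non-dynamic stochastic six-vertex model (at `λ = −i∞` the dynamic
transfer matrix equals `Trev`). -/
theorem Trev_duality_Dnew (q z u : ℂ) (hq : q ≠ 0) (hz : z * q ^ 2 ≠ 1) :
    Trev q z * Dnew q u = Dnew q u * (Trev q z)ᵀ := by
  have hd : z * q ^ 2 - 1 ≠ 0 := sub_ne_zero.mpr hz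
  have hd' : q ^ 2 * z - 1 ≠ 0 := by rwa [mul_comm]
  have hp : ∀ n : ℕ, q ^ (-(n:ℤ)) = (q ^ n)⁻¹ := fun n => by
    rw [_root_.zpow_neg, zpow_natCast]
  ext i j
  fin_cases i <;> fin_cases j <;>
  · simp only [Trev, Dnew, Matrix.mul_apply, Fin.sum_univ_four, Matrix.transpose_apply,
      Matrix.cons_val', Matrix.cons_val_zero, Matrix.cons_val_one, Matrix.head_cons,
      Matrix.empty_val', Matrix.cons_val_fin_one, Matrix.head_fin_const, Matrix.cons_val_two,
      Matrix.tail_cons, Matrix.cons_val_three, Matrix.head_fin_const,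
      show ((-6:ℤ) = -(6:ℕ)) from rfl, show ((-4:ℤ) = -(4:ℕ)) from rfl,
      show ((-2:ℤ) = -(2:ℕ)) from rfl, show ((-8:ℤ) = -(8:ℕ)) from rfl, hp,
      Fin.isValue, Matrix.of_apply, show (⟨0, by omega⟩ : Fin 4) = 0 from rfl,
      show (⟨1, by omega⟩ : Fin 4) = 1 from rfl, show (⟨2, by omega⟩ : Fin 4) = 2 from rfl,
      show (⟨3, by omega⟩ : Fin 4) = 3 from rfl]
    field_simp
    try ring
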